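/- Let (S, 𝒜, P) be a probability space, d ≥ 1, and X : S → ℝ^d a measurable random vector with E‖X‖² < ∞. Let β ∈ ℝ^d, let m ⊆ 𝒜 be the σ-algebra generated by the real random variable βᵀX (the comap of the Borel σ-algebra under ω ↦ βᵀX(ω)), and let h = E[X | m] be the (vector-valued) conditional expectation of X given m. Let w : ℝ → ℝ be a bounded nonnegative Borel function, and define the d×d matrix Ω = E[ (X Xᵀ − h hᵀ) · w(βᵀX) ] (entrywise expectations, which exist under the stated assumptions). Then βᵀΩβ = 0; equivalently, the matrix Ω degenerates in the direction of β for the quadratic form. (This rests on the identity βᵀh = βᵀX almost surely.) -/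

import Mathlib

open MeasureTheory Matrix

section Aux
variable {S : Type} {m m0 : MeasurableSpace S}

lemma condexp_clm_comp {E F : Type*} [NormedAddCommGroup E] [NormedSpace ℝ E] [CompleteSpace E]
    [NormedAddCommGroup F] [NormedSpace ℝ F] [CompleteSpace F]
    (hm : m ≤ m0) {P : Measure S} [SigmaFinite (P.trim hm)] {f : S → E} (hf : Integrable f P)
    (L : E →L[ℝ] F) :
    (fun ω => L ((condExp m P f) ω)) =ᵐ[P] condExp m P (fun ω => L (f ω)) := by
  refine ae_eq_condExp_of_forall_setIntegral_eq hm (L.integrable_comp hf) ?_ ?_ ?_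
  · intro s _ _; exact (L.integrable_comp integrable_condExp).integrableOn
  · intro s hs _
    rw [L.integral_comp_comm integrable_condExp.integrableOn,
        setIntegral_condExp hm hf hs, L.integral_comp_comm hf.integrableOn]
  · exact (L.continuous.comp_stronglyMeasurable stronglyMeasurable_condExp).aestronglyMeasurable

lemma memLp_two_condexp (hm : m ≤ m0) {P : Measure S} [IsFiniteMeasure P] {f : S → ℝ}
    (hf : MemLp f 2 P) : MemLp (condExp m P f) 2 P := by
  have h2 : ((condExpL2 ℝ ℝ hm (hf.toLp f) : Lp ℝ 2 P) : S → ℝ) =ᵐ[P] (condExp m P f) := by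
    refine ae_eq_condExp_of_forall_setIntegral_eq hm (hf.integrable one_le_two) ?_ ?_ ?_
    · intro s hs hμs
      exact integrableOn_condExpL2_of_measure_ne_top hm hμs.ne _
    · intro s hs hμs
      rw [integral_condExpL2_eq hm (hf.toLp f) hs hμs.ne]
      exact setIntegral_congr_ae (hm s hs) ((hf.coeFn_toLp).mono fun x hx _ => hx)
    · exact aestronglyMeasurable_condExpL2 hm _
  exact (Lp.memLp _).ae_eq h2

end Aux

theorem stmt_3 (d : ℕ) (hd : 1 ≤ d) {S : Type} [MeasurableSpace S]
    (P : Measure S) [IsProbabilityMeasure P]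
    (X : S → EuclideanSpace ℝ (Fin d)) (hX : Measurable X)
    (hX2 : Integrable (fun ω => ‖X ω‖ ^ 2) P)
    (β : EuclideanSpace ℝ (Fin d))
    (w : ℝ → ℝ) (hw : Measurable w) (C : ℝ)
    (hw0 : ∀ t, 0 ≤ w t) (hwC : ∀ t, w t ≤ C)
    (m : MeasurableSpace S)
    (hm : m = MeasurableSpace.comap (fun ω => ∑ i, β i * X ω i)
      (inferInstance : MeasurableSpace ℝ))
    (h : S → EuclideanSpace ℝ (Fin d)) (hh : h = P[X | m])
    (Ω : Matrix (Fin d) (Fin d) ℝ)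
    (hΩ : ∀ i j, Ω i j =
      ∫ ω, (X ω i * X ω j - h ω i * h ω j) * w (∑ k, β k * X ω k) ∂P) :
    (fun i => β i) ⬝ᵥ Ω.mulVec (fun i => β i) = 0 := by
  subst hm
  subst hh
  have hTmeas : Measurable (fun ω => ∑ i, β i * X ω i) := by
    apply Finset.measurable_sum
    intro i _
    exact measurable_const.mul
      (((EuclideanSpace.proj i : EuclideanSpace ℝ (Fin d) →L[ℝ] ℝ).continuous.measurable).comp hX)
  have hm_le : MeasurableSpace.comap (fun ω => ∑ i, β i * X ω i)
      (inferInstance : MeasurableSpace ℝ) ≤ (inferInstance : MeasurableSpace S) :=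
    hTmeas.comap_le
  haveI : SigmaFinite (P.trim hm_le) := by
    haveI : IsFiniteMeasure (P.trim hm_le) := isFiniteMeasure_trim hm_le
    infer_instance
  -- L² facts
  have hXmem : MemLp X 2 P :=
    (memLp_two_iff_integrable_sq_norm hX.aestronglyMeasurable).mpr hX2
  have hXint : Integrable X P := hXmem.integrable one_le_two
  have hXi : ∀ i, MemLp (fun ω => X ω i) 2 P := fun i =>
    (EuclideanSpace.proj i : EuclideanSpace ℝ (Fin d) →L[ℝ] ℝ).comp_memLp' hXmem
  have hpqr : (1 : ENNReal) / 1 = 1 / 2 + 1 / 2 := by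
    rw [ENNReal.div_add_div_same, one_add_one_eq_two,
      ENNReal.div_self two_ne_zero ENNReal.ofNat_ne_top, div_one]
  -- componentwise condexp
  have hhi : ∀ i, MemLp
      (fun ω => (P[X|MeasurableSpace.comap (fun ω => ∑ i, β i * X ω i)
        (inferInstance : MeasurableSpace ℝ)]) ω i) 2 P := by
    intro i
    have h1 := condexp_clm_comp hm_le hXint
      (EuclideanSpace.proj i : EuclideanSpace ℝ (Fin d) →L[ℝ] ℝ)
    exact (memLp_two_condexp hm_le (hXi i)).ae_eq h1.symm
  -- key identity
  have hTsm : StronglyMeasurable[MeasurableSpace.comap (fun ω => ∑ i, β i * X ω i)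
      (inferInstance : MeasurableSpace ℝ)] (fun ω => ∑ i, β i * X ω i) :=
    Measurable.stronglyMeasurable (Measurable.of_comap_le le_rfl)
  have hTint : Integrable (fun ω => ∑ i, β i * X ω i) P := by
    apply integrable_finset_sum
    intro i _
    exact ((hXi i).integrable one_le_two).const_mul (β i)
  have hkey : (fun ω => ∑ i, β i *
      (P[X|MeasurableSpace.comap (fun ω => ∑ i, β i * X ω i)
        (inferInstance : MeasurableSpace ℝ)]) ω i)
      =ᵐ[P] fun ω => ∑ i, β i * X ω i := by
    have h1 := condexp_clm_comp hm_le hXint (innerSL ℝ β)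
    have hinner : ∀ (g : S → EuclideanSpace ℝ (Fin d)),
        (fun ω => (innerSL ℝ β) (g ω)) = fun ω => ∑ i, β i * g ω i := by
      intro g; funext ω
      simp [PiLp.inner_apply, RCLike.inner_apply, conj_trivial, mul_comm]
    rw [hinner X] at h1
    rw [condExp_of_stronglyMeasurable hm_le hTsm hTint] at h1
    rw [hinner _] at h1
    exact h1
  -- integrability of the integrands
  have hwb : ∃ C', ∀ ω, ‖w (∑ k, β k * X ω k)‖ ≤ C' := by
    refine ⟨C, fun ω => ?_⟩
    rw [Real.norm_eq_abs, abs_of_nonneg (hw0 _)]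
    exact hwC _
  have hwm : AEStronglyMeasurable (fun ω => w (∑ k, β k * X ω k)) P :=
    (hw.comp hTmeas).aestronglyMeasurable
  have hmul : ∀ (f g : S → ℝ), MemLp f 2 P → MemLp g 2 P →
      Integrable (fun ω => f ω * g ω) P := by
    intro f g hf hg
    have := hg.smul hf (r := 1) (𝕜 := ℝ) (E := ℝ)
    rw [memLp_one_iff_integrable] at this
    exact this
  have hF : ∀ i j, Integrable
      (fun ω => (X ω i * X ω j -
        (P[X|MeasurableSpace.comap (fun ω => ∑ i, β i * X ω i)
          (inferInstance : MeasurableSpace ℝ)]) ω i *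
        (P[X|MeasurableSpace.comap (fun ω => ∑ i, β i * X ω i)
          (inferInstance : MeasurableSpace ℝ)]) ω j) * w (∑ k, β k * X ω k)) P := by
    intro i j
    have hA : Integrable (fun ω => X ω i * X ω j -
        (P[X|MeasurableSpace.comap (fun ω => ∑ i, β i * X ω i)
          (inferInstance : MeasurableSpace ℝ)]) ω i *
        (P[X|MeasurableSpace.comap (fun ω => ∑ i, β i * X ω i)
          (inferInstance : MeasurableSpace ℝ)]) ω j) P :=
      (hmul _ _ (hXi i) (hXi j)).sub (hmul _ _ (hhi i) (hhi j))
    have h2 := hA.bdd_mul hwm (Filter.Eventually.of_forall hwb.choose_spec)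
    refine h2.congr (Filter.EventuallyEq.of_eq ?_)
    funext ω; ring
  -- final computation
  have hdot : (fun i => β i) ⬝ᵥ Ω.mulVec (fun i => β i) =
      ∑ i, ∑ j, β i * β j * Ω i j := by
    simp only [dotProduct, mulVec, Finset.mul_sum]
    exact Finset.sum_congr rfl fun i _ => Finset.sum_congr rfl fun j _ => by ring
  rw [hdot]
  have hstep : ∀ i j, β i * β j * Ω i j =
      ∫ ω, β i * β j * ((X ω i * X ω j -
        (P[X|MeasurableSpace.comap (fun ω => ∑ i, β i * X ω i)
          (inferInstance : MeasurableSpace ℝ)]) ω i *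
        (P[X|MeasurableSpace.comap (fun ω => ∑ i, β i * X ω i)
          (inferInstance : MeasurableSpace ℝ)]) ω j) * w (∑ k, β k * X ω k)) ∂P := by
    intro i j
    rw [hΩ i j, ← integral_const_mul]
  calc (∑ i, ∑ j, β i * β j * Ω i j)
      = ∑ i, ∫ ω, ∑ j, β i * β j * ((X ω i * X ω j -
          (P[X|MeasurableSpace.comap (fun ω => ∑ i, β i * X ω i)
            (inferInstance : MeasurableSpace ℝ)]) ω i *
          (P[X|MeasurableSpace.comap (fun ω => ∑ i, β i * X ω i)
            (inferInstance : MeasurableSpace ℝ)]) ω j) * w (∑ k, β k * X ω k)) ∂P := by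
        refine Finset.sum_congr rfl fun i _ => ?_
        rw [integral_finset_sum _ (fun j _ => ((hF i j).const_mul (β i * β j)))]
        exact Finset.sum_congr rfl fun j _ => hstep i j
    _ = ∫ ω, ∑ i, ∑ j, β i * β j * ((X ω i * X ω j -
          (P[X|MeasurableSpace.comap (fun ω => ∑ i, β i * X ω i)
            (inferInstance : MeasurableSpace ℝ)]) ω i *
          (P[X|MeasurableSpace.comap (fun ω => ∑ i, β i * X ω i)
            (inferInstance : MeasurableSpace ℝ)]) ω j) * w (∑ k, β k * X ω k)) ∂P := by
        rw [integral_finset_sum _ (fun i _ => integrable_finset_sum _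
          (fun j _ => ((hF i j).const_mul (β i * β j))))]
    _ = 0 := by
        rw [← integral_zero S ℝ (μ := P)]
        refine integral_congr_ae (hkey.mono fun ω hω => ?_)
        dsimp only at hω ⊢
        have e : ∀ (u v : EuclideanSpace ℝ (Fin d)) (c : ℝ),
            ∑ i, ∑ j, β i * β j * ((u i * u j - v i * v j) * c)
            = ((∑ i, β i * u i) * (∑ j, β j * u j)
              - (∑ i, β i * v i) * (∑ j, β j * v j)) * c := by
          intro u v c
          rw [Finset.sum_mul_sum, Finset.sum_mul_sum, ← Finset.sum_sub_distrib,
            Finset.sum_mul]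
          refine Finset.sum_congr rfl fun i _ => ?_
          rw [← Finset.sum_sub_distrib, Finset.sum_mul]
          exact Finset.sum_congr rfl fun j _ => by ring
        rw [e, hω]
        simp
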